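/- Let (X_n, d_n) be a uniformly totally bounded sequence of compact metric spaces (for every ε > 0 there is m so that each X_n is covered by m ε-balls) and f_n : X_n → X_{n+1} continuous maps forming a strongly uniformly expansive system with constant δ. Then the topological entropy satisfies h_top(f_∞) ≤ log m(δ/2), where m(δ/2) is the uniform number of δ/2-balls needed to cover each X_n. In particular h_top(f_∞) is finite. -/

import Mathlib

open Filter

/-- The composition `f_0^j = f_{j-1} ∘ ⋯ ∘ f_0 : X 0 → X j`. -/
def it0 {X : ℕ → Type*} (f : ∀ n, X n → X (n + 1)) : ∀ j, X 0 → X j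
  | 0 => id
  | j + 1 => fun x => f j (it0 f j x)

/-- The composition `f_i^n = f_{i+n-1} ∘ ⋯ ∘ f_i : X i → X (i+n)`. -/
def itf {X : ℕ → Type*} (f : ∀ n, X n → X (n + 1)) : ∀ i n, X i → X (i + n)
  | _, 0 => id
  | i, n + 1 => fun x => f (i + n) (itf f i n x)

/-- `r_sep(n,ε)`: the maximal cardinality of an `(n,ε)`-separated subset of `X 0`
(w.r.t. the Bowen metric `d_{0,n} = max_{0 ≤ j ≤ n}`). -/
noncomputable def rsep {X : ℕ → Type*} [∀ n, MetricSpace (X n)]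
    (f : ∀ n, X n → X (n + 1)) (n : ℕ) (ε : ℝ) : ℕ :=
  sSup {k : ℕ | ∃ E : Finset (X 0),
    (∀ x ∈ E, ∀ y ∈ E, x ≠ y → ∃ j ≤ n, ε ≤ dist (it0 f j x) (it0 f j y)) ∧
    E.card = k}

/-- Topological entropy of the nonautonomous system, via separated sets:
`h_top = lim_{ε→0} limsup_n (1/n) log r_sep(n,ε)`, realized (by antitonicity in `ε`)
as the supremum over `ε > 0`, valued in `EReal`. -/
noncomputable def htop {X : ℕ → Type*} [∀ n, MetricSpace (X n)]
    (f : ∀ n, X n → X (n + 1)) : EReal :=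
  ⨆ (ε : ℝ) (_ : 0 < ε),
    limsup (fun n : ℕ => ((Real.log (rsep f n ε) / n : ℝ) : EReal)) atTop

lemma itf_it0 {X : ℕ → Type*} (f : ∀ n, X n → X (n + 1)) (i j : ℕ) (x : X 0) :
    itf f i j (it0 f i x) = it0 f (i + j) x := by
  induction j with
  | zero => rfl
  | succ j ih =>
    show f (i + j) (itf f i j (it0 f i x)) = f (i + j) (it0 f (i + j) x)
    rw [ih]

lemma rsep_le {X : ℕ → Type*} [∀ n, MetricSpace (X n)]
    (f : ∀ n, X n → X (n + 1)) (δ : ℝ) (hδ : 0 < δ)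
    (mδ : ℕ) (hm : ∀ n, ∃ s : Finset (X n),
      s.card ≤ mδ ∧ ∀ x : X n, ∃ c ∈ s, dist x c < δ / 2)
    (ε : ℝ) (N : ℕ)
    (hN : ∀ i, ∀ x y : X i,
      (∀ j ≤ N, dist (itf f i j x) (itf f i j y) < δ) → dist x y < ε)
    (n : ℕ) :
    rsep f n ε ≤ mδ ^ (n + N + 1) := by
  set M := n + N + 1 with hM
  -- choose the covers
  choose s hs1 hs2 using hm
  choose c hc1 hc2 using hs2
  -- itinerary map
  set φ : X 0 → (∀ j : Fin M, {a : X j.val // a ∈ s j.val}) :=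
    fun x j => ⟨c j.val (it0 f j.val x), hc1 _ _⟩ with hφ
  apply csSup_le'
  rintro k ⟨E, hE, rfl⟩
  -- E.card ≤ card of target
  have hinj : Set.InjOn φ (E : Set (X 0)) := by
    intro x hx y hy hxy
    by_contra hne
    obtain ⟨j, hj, hsep⟩ := hE x hx y hy hne
    -- all iterates up to M-1 are δ-close
    have hclose : ∀ k < M, dist (it0 f k x) (it0 f k y) < δ := by
      intro k hk
      have := congrFun hxy ⟨k, hk⟩
      have hcc : c k (it0 f k x) = c k (it0 f k y) := by
        simpa [hφ] using congrArg Subtype.val this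
      calc dist (it0 f k x) (it0 f k y)
          ≤ dist (it0 f k x) (c k (it0 f k x)) + dist (c k (it0 f k y)) (it0 f k y) := by
            rw [hcc]; exact dist_triangle _ _ _
        _ < δ / 2 + δ / 2 := by
            apply add_lt_add (hc2 _ _)
            rw [dist_comm]; exact hc2 _ _
        _ = δ := by ring
    have := hN j (it0 f j x) (it0 f j y) (by
      intro l hl
      rw [itf_it0, itf_it0]
      exact hclose (j + l) (by omega))
    exact absurd hsep (not_le.mpr this)
  have hcard : E.card ≤ Fintype.card (∀ j : Fin M, {a : X j.val // a ∈ s j.val}) := by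
    classical
    rw [← Fintype.card_coe E]
    exact Fintype.card_le_of_injective (fun x => φ x.val)
      (fun a b hab => Subtype.ext (hinj a.2 b.2 hab))
  refine hcard.trans ?_
  rw [Fintype.card_pi]
  calc ∏ j : Fin M, Fintype.card {a : X j.val // a ∈ s j.val}
      ≤ ∏ _j : Fin M, mδ := by
        apply Finset.prod_le_prod'
        intro j _
        rw [Fintype.card_coe]
        exact hs1 j.val
    _ = mδ ^ M := by simp

theorem stmt10 {X : ℕ → Type*} [∀ n, MetricSpace (X n)] [∀ n, CompactSpace (X n)]
    (f : ∀ n, X n → X (n + 1)) (hf : ∀ n, Continuous (f n))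
    (hutb : ∀ ε > 0, ∃ m : ℕ, ∀ n, ∃ s : Finset (X n),
      s.card ≤ m ∧ ∀ x : X n, ∃ c ∈ s, dist x c < ε)
    (δ : ℝ) (hδ : 0 < δ)
    (hsue : ∀ ε > 0, ∃ N : ℕ, 1 ≤ N ∧ ∀ i, ∀ x y : X i,
      (∀ j ≤ N, dist (itf f i j x) (itf f i j y) < δ) → dist x y < ε)
    (mδ : ℕ) (hm : ∀ n, ∃ s : Finset (X n),
      s.card ≤ mδ ∧ ∀ x : X n, ∃ c ∈ s, dist x c < δ / 2) :
    htop f ≤ ((Real.log mδ : ℝ) : EReal) := by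
  have hL0 : 0 ≤ Real.log mδ := by
    cases mδ with
    | zero => simp
    | succ k => exact Real.log_nonneg (by exact_mod_cast Nat.one_le_iff_ne_zero.mpr (by simp))
  set L := Real.log mδ with hLdef
  rw [htop]
  apply iSup₂_le
  intro ε hε
  obtain ⟨N, -, hN⟩ := hsue ε hε
  have hbd := rsep_le f δ hδ mδ hm ε N hN
  -- real-valued upper bound
  set v : ℕ → ℝ := fun n => L + ((N + 1 : ℝ) * L) / n with hv
  have hvle : ∀ n : ℕ, 1 ≤ n → Real.log (rsep f n ε) / n ≤ v n := by
    intro n hn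
    have hnpos : (0 : ℝ) < n := by exact_mod_cast hn
    have h1 : Real.log (rsep f n ε) ≤ (n + N + 1 : ℝ) * L := by
      rcases Nat.eq_zero_or_pos (rsep f n ε) with h | h
      · rw [h]
        simp only [Nat.cast_zero, Real.log_zero]
        positivity
      · calc Real.log (rsep f n ε) ≤ Real.log ((mδ : ℝ) ^ (n + N + 1)) := by
              apply Real.log_le_log (by exact_mod_cast h)
              exact_mod_cast hbd n
          _ = (n + N + 1 : ℝ) * L := by
              rw [Real.log_pow]; push_cast; ring
    calc Real.log (rsep f n ε) / n ≤ ((n + N + 1 : ℝ) * L) / n := by gcongr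
      _ = v n := by simp only [hv]; field_simp; ring
  have hvtend : Tendsto v atTop (nhds L) := by
    have : Tendsto (fun n : ℕ => ((N + 1 : ℝ) * L) / n) atTop (nhds 0) :=
      Tendsto.div_atTop tendsto_const_nhds tendsto_natCast_atTop_atTop
    simpa [hv] using tendsto_const_nhds.add this
  have hvtendE : Tendsto (fun n : ℕ => ((v n : ℝ) : EReal)) atTop (nhds ((L : ℝ) : EReal)) := by
    exact (EReal.tendsto_coe).mpr hvtend
  calc limsup (fun n : ℕ => ((Real.log (rsep f n ε) / n : ℝ) : EReal)) atTop
      ≤ limsup (fun n : ℕ => ((v n : ℝ) : EReal)) atTop := by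
        apply limsup_le_limsup ?_ isCobounded_le_of_bot isBounded_le_of_top
        filter_upwards [eventually_ge_atTop 1] with n hn
        exact_mod_cast hvle n hn
    _ = ((L : ℝ) : EReal) := hvtendE.limsup_eq
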